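/- For positive integers n and k, the number W_{2n}(T_k) of closed walks of length 2n in the regular leaning tree T_k that begin and end at the root equals G_{n+1,k+1} − G_{n+1,k}, the number of (n+1)-node planted plane trees with strictly decreasing labels and root label exactly k+1. -/

import Mathlib

/-- The regular leaning tree of order `k` as a graph.  Vertices are subsets of
`{0, ..., k-1}` (the root is `∅`), and the children of a vertex `S` are the
sets `insert j S` with `j` smaller than every element of `S`; thus the root
`∅` has subtrees that are leaning trees of orders `k-1, k-2, ..., 0`. -/
def leaningGraph (k : ℕ) : SimpleGraph (Finset (Fin k)) where
  Adj S T := (∃ j ∉ S, T = insert j S ∧ ∀ i ∈ S, j < i) ∨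
    (∃ j ∉ T, S = insert j T ∧ ∀ i ∈ T, j < i)
  symm := ⟨fun S T h => h.symm⟩
  loopless := by
    constructor
    intro S h
    rcases h with ⟨j, hj, hT, -⟩ | ⟨j, hj, hT, -⟩ <;>
      exact hj (by rw [hT]; exact Finset.mem_insert_self j S)

/-- A planted plane tree with natural-number labels: a labelled root together
with an ordered list of labelled subtrees. -/
inductive LTree where
  | node : ℕ → List LTree → LTree

/-- The label of the root. -/
def LTree.label : LTree → ℕ
  | .node l _ => l

/-- The number of nodes. -/
def LTree.size : LTree → ℕ
  | .node _ c => 1 + (c.attach.map (fun t => LTree.size t.1)).sum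
decreasing_by have := List.sizeOf_lt_of_mem t.2; simp at *; omega

/-- Labels strictly decrease along every root-to-leaf path, i.e. every child's
label is strictly smaller than its parent's label. -/
inductive LTree.Dec : LTree → Prop
  | node (l : ℕ) (c : List LTree) (h1 : ∀ t ∈ c, t.label < l)
      (h2 : ∀ t ∈ c, LTree.Dec t) : LTree.Dec (.node l c)

/-- All labels belong to {1, ..., k}. -/
inductive LTree.Bounded (k : ℕ) : LTree → Prop
  | node (l : ℕ) (c : List LTree) (h1 : 1 ≤ l) (h2 : l ≤ k)
      (h : ∀ t ∈ c, LTree.Bounded k t) : LTree.Bounded k (.node l c)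

/-- `Gcount n k` is the number of planted plane trees on `n` nodes with labels
from `{1, ..., k}` that strictly decrease along every root-to-leaf path. -/
noncomputable def Gcount (n k : ℕ) : ℕ :=
  Set.ncard {t : LTree | t.size = n ∧ t.Dec ∧ t.Bounded k}
-- test chunk appended to base defs
namespace Stmt13
open SimpleGraph

variable {k : ℕ}

lemma not_mem_of_lt {S : Finset (Fin k)} {j : Fin k} (h : ∀ i ∈ S, j < i) : j ∉ S :=
  fun hj => lt_irrefl j (h j hj)

lemma adj_down {S : Finset (Fin k)} {j : Fin k} (h : ∀ i ∈ S, j < i) :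
    (leaningGraph k).Adj S (insert j S) :=
  Or.inl ⟨j, not_mem_of_lt h, rfl, h⟩

lemma adj_up {S : Finset (Fin k)} {j : Fin k} (h : ∀ i ∈ S, j < i) :
    (leaningGraph k).Adj (insert j S) S :=
  Or.inr ⟨j, not_mem_of_lt h, rfl, h⟩

/-- join a list of closed walks -/
def joinW {S : Finset (Fin k)} : List ((leaningGraph k).Walk S S) → (leaningGraph k).Walk S S
  | [] => SimpleGraph.Walk.nil
  | w :: ws => w.append (joinW ws)

/-- encode a tree as a closed walk at `S` (junk `nil` if the tree does not fit) -/
def encT : LTree → (S : Finset (Fin k)) → (leaningGraph k).Walk S S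
  | .node l c, S =>
    if h : 1 ≤ l ∧ l ≤ k ∧ ∀ i ∈ S, l - 1 < (i : ℕ) then
      have hlk : l - 1 < k := by omega
      let j : Fin k := ⟨l - 1, hlk⟩
      have hj : ∀ i ∈ S, j < i := fun i hi => by
        simpa [j, Fin.lt_def] using h.2.2 i hi
      SimpleGraph.Walk.cons (adj_down hj)
        ((joinW (c.attach.map fun t => encT t.1 (insert j S))).append
          (SimpleGraph.Walk.cons (adj_up hj) SimpleGraph.Walk.nil))
    else SimpleGraph.Walk.nil
decreasing_by have := List.sizeOf_lt_of_mem t.2; simp at *; omega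

def encF (S : Finset (Fin k)) (c : List LTree) : (leaningGraph k).Walk S S :=
  joinW (c.map fun t => encT t S)

end Stmt13
namespace Stmt13
open SimpleGraph Walk

variable {k : ℕ}

/-- the tree fits as (the tree of) a child of the vertex `S` -/
inductive Fits : Finset (Fin k) → LTree → Prop
  | node (S : Finset (Fin k)) (l : ℕ) (c : List LTree) (h1 : 1 ≤ l) (h2 : l ≤ k)
      (h3 : ∀ i ∈ S, l - 1 < (i : ℕ))
      (h4 : ∀ t ∈ c, Fits (insert (⟨l - 1, by omega⟩ : Fin k) S) t) : Fits S (.node l c)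

lemma size_node (l : ℕ) (c : List LTree) :
    (LTree.node l c).size = 1 + (c.map LTree.size).sum := by
  rw [LTree.size]
  congr 1
  simp

lemma hjlt {S : Finset (Fin k)} {l : ℕ} (hlk : l - 1 < k) (h1 : 1 ≤ l)
    (h3 : ∀ i ∈ S, l - 1 < (i : ℕ)) :
    ∀ i ∈ S, (⟨l - 1, hlk⟩ : Fin k) < i := fun i hi => by
  simpa [Fin.lt_def] using h3 i hi

lemma encT_node (S : Finset (Fin k)) (l : ℕ) (c : List LTree) (h1 : 1 ≤ l) (h2 : l ≤ k)
    (h3 : ∀ i ∈ S, l - 1 < (i : ℕ)) :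
    encT (LTree.node l c) S =
      Walk.cons (adj_down (hjlt (by omega) h1 h3))
        ((encF (insert (⟨l - 1, by omega⟩ : Fin k) S) c).append
          (Walk.cons (adj_up (hjlt (by omega) h1 h3)) Walk.nil)) := by
  rw [encT, dif_pos ⟨h1, h2, h3⟩]
  simp only [encF]
  congr 2
  simp

def Stays (X : Finset (Fin k)) {a b : Finset (Fin k)} (p : (leaningGraph k).Walk a b) : Prop :=
  ∀ y ∈ p.support, X ⊆ y

end Stmt13
namespace Stmt13
open SimpleGraph Walk

variable {k : ℕ}

lemma stays_nil {X a : Finset (Fin k)} (h : X ⊆ a) :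
    Stays X (Walk.nil : (leaningGraph k).Walk a a) := by
  intro y hy; simp [Walk.support_nil] at hy; subst hy; exact h

lemma stays_cons {X a b c : Finset (Fin k)} (h : (leaningGraph k).Adj a b)
    {p : (leaningGraph k).Walk b c} (ha : X ⊆ a) (hp : Stays X p) :
    Stays X (Walk.cons h p) := by
  intro y hy
  rw [Walk.support_cons] at hy
  rcases List.mem_cons.mp hy with rfl | hy
  · exact ha
  · exact hp y hy

lemma stays_append {X a b c : Finset (Fin k)} {p : (leaningGraph k).Walk a b}
    {q : (leaningGraph k).Walk b c} (hp : Stays X p) (hq : Stays X q) :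
    Stays X (p.append q) := by
  intro y hy
  rw [Walk.support_append] at hy
  rcases List.mem_append.mp hy with h | h
  · exact hp y h
  · exact hq y (List.mem_of_mem_tail h)

lemma stays_mono {X X' a b : Finset (Fin k)} {p : (leaningGraph k).Walk a b}
    (hX : X' ⊆ X) (hp : Stays X p) : Stays X' p :=
  fun y hy => hX.trans (hp y hy)

lemma stays_of_cons {X a b c : Finset (Fin k)} {h : (leaningGraph k).Adj a b}
    {p : (leaningGraph k).Walk b c} (hp : Stays X (Walk.cons h p)) : Stays X p := by
  intro y hy
  exact hp y (by rw [Walk.support_cons]; exact List.mem_cons_of_mem _ hy)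

lemma encF_cons (S : Finset (Fin k)) (t : LTree) (ts : List LTree) :
    encF S (t :: ts) = (encT t S).append (encF S ts) := rfl

lemma encF_nil (S : Finset (Fin k)) : encF S [] = Walk.nil := rfl

/-- lengths and supports of encoded forests -/
lemma props : ∀ (N : ℕ) (c : List LTree) (S : Finset (Fin k)),
    (c.map LTree.size).sum ≤ N → (∀ t ∈ c, Fits S t) →
    (encF S c).length = 2 * (c.map LTree.size).sum ∧ Stays S (encF S c) := by
  intro N
  induction N with
  | zero =>
    intro c S hN hF
    cases c with
    | nil => exact ⟨rfl, stays_nil le_rfl⟩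
    | cons t ts =>
      exfalso
      rcases hF t (List.mem_cons_self) with ⟨_, l, c', h1, h2, h3, h4⟩
      simp [size_node] at hN
  | succ N ih =>
    intro c S hN hF
    cases c with
    | nil => exact ⟨rfl, stays_nil le_rfl⟩
    | cons t ts =>
      rcases hF t (List.mem_cons_self) with ⟨_, l, c', h1, h2, h3, h4⟩
      have hts : ∀ t' ∈ ts, Fits S t' := fun t' ht' => hF t' (List.mem_cons_of_mem _ ht')
      simp only [List.map_cons, List.sum_cons, size_node] at hN
      set j : Fin k := (⟨l - 1, by omega⟩ : Fin k) with hjdef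
      have hsub : S ⊆ insert j S := Finset.subset_insert _ _
      obtain ⟨ih1len, ih1st⟩ := ih c' (insert j S) (by omega) h4
      obtain ⟨ih2len, ih2st⟩ := ih ts S (by omega) hts
      rw [encF_cons, encT_node S l c' h1 h2 h3]
      constructor
      · simp only [Walk.length_append, Walk.length_cons, Walk.length_nil, ih1len, ih2len,
          List.map_cons, List.sum_cons, size_node]
        have hl1 : (encF (insert (⟨l - 1, by omega⟩ : Fin k) S) c').length =
            2 * (c'.map LTree.size).sum := ih1len
        omega
      · refine stays_append (stays_cons _ le_rfl ?_) ih2st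
        exact stays_append (stays_mono hsub ih1st)
          (stays_cons _ (by exact hsub) (stays_nil le_rfl))

end Stmt13
namespace Stmt13
open SimpleGraph Walk

variable {k : ℕ}

lemma append_cancel {T S : Finset (Fin k)} :
    ∀ {A : Finset (Fin k)} (w1 w1' : (leaningGraph k).Walk A T)
      {w2 w2' : (leaningGraph k).Walk S S}
      (u : (leaningGraph k).Adj T S) (u' : (leaningGraph k).Adj T S),
      S ∉ w1.support → S ∉ w1'.support →
      w1.append (Walk.cons u w2) = w1'.append (Walk.cons u' w2') →
      w1 = w1' ∧ w2 = w2' := by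
  intro A w1
  induction w1 with
  | nil =>
    intro w1' w2 w2' u u' h1 h1' heq
    cases w1' with
    | nil =>
      simp only [Walk.nil_append] at heq
      injection heq with _ _ _ h
      exact ⟨rfl, h⟩
    | cons a p =>
      exfalso
      simp only [Walk.nil_append, Walk.cons_append] at heq
      injection heq with _ hv _ _
      apply h1'
      rw [Walk.support_cons]
      exact List.mem_cons_of_mem _ (by rw [hv]; exact Walk.start_mem_support p)
  | cons a p ihp =>
    intro w1' w2 w2' u u' h1 h1' heq
    cases w1' with
    | nil =>
      exfalso
      simp only [Walk.nil_append, Walk.cons_append] at heq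
      injection heq with _ hv _ _
      apply h1
      rw [Walk.support_cons]
      exact List.mem_cons_of_mem _ (by rw [← hv]; exact Walk.start_mem_support p)
    | cons a' p' =>
      simp only [Walk.cons_append] at heq
      injection heq with _ hv _ hp
      subst hv
      obtain ⟨e1, e2⟩ := ihp p' u u'
        (fun hS => h1 (by rw [Walk.support_cons]; exact List.mem_cons_of_mem _ hS))
        (fun hS => h1' (by rw [Walk.support_cons]; exact List.mem_cons_of_mem _ hS))
        (eq_of_heq hp)
      exact ⟨by rw [e1], e2⟩

end Stmt13
namespace Stmt13
open SimpleGraph Walk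

variable {k : ℕ}

lemma not_mem_support_of_stays {S T : Finset (Fin k)} {j : Fin k} (hj : j ∈ T) (hjS : j ∉ S)
    {a b : Finset (Fin k)} {p : (leaningGraph k).Walk a b} (h : Stays T p) :
    S ∉ p.support := fun hS => hjS (h S hS hj)

lemma sum_eq_of_encF_eq {c c' : List LTree} {S : Finset (Fin k)}
    (hF : ∀ t ∈ c, Fits S t) (hF' : ∀ t ∈ c', Fits S t)
    (h : encF S c = encF S c') :
    (c.map LTree.size).sum = (c'.map LTree.size).sum := by
  have h1 := (props _ c S le_rfl hF).1
  have h2 := (props _ c' S le_rfl hF').1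
  have := congrArg Walk.length h
  rw [h1, h2] at this
  omega

lemma encF_inj : ∀ (N : ℕ) (c c' : List LTree) (S : Finset (Fin k)),
    (c.map LTree.size).sum ≤ N → (∀ t ∈ c, Fits S t) → (∀ t ∈ c', Fits S t) →
    encF S c = encF S c' → c = c' := by
  intro N
  induction N with
  | zero =>
    intro c c' S hN hF hF' h
    have hsum := sum_eq_of_encF_eq hF hF' h
    cases c with
    | cons t ts =>
      exfalso
      rcases hF t (List.mem_cons_self) with ⟨_, l, c1, h1, h2, h3, h4⟩
      simp [size_node] at hN
    | nil =>
      cases c' with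
      | nil => rfl
      | cons t' ts' =>
        exfalso
        rcases hF' t' (List.mem_cons_self) with ⟨_, l, c1, h1, h2, h3, h4⟩
        simp [size_node] at hsum 
        all_goals omega
  | succ N ih =>
    intro c c' S hN hF hF' h
    have hsum := sum_eq_of_encF_eq hF hF' h
    cases c with
    | nil =>
      cases c' with
      | nil => rfl
      | cons t' ts' =>
        exfalso
        rcases hF' t' (List.mem_cons_self) with ⟨_, l, c1, h1, h2, h3, h4⟩
        simp [size_node] at hsum 
        all_goals omega
    | cons t ts =>
      cases c' with
      | nil =>
        exfalso
        rcases hF t (List.mem_cons_self) with ⟨_, l, c1, h1, h2, h3, h4⟩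
        simp [size_node] at hsum 
        all_goals omega
      | cons t' ts' =>
        rcases hF t (List.mem_cons_self) with ⟨_, l, c1, h1, h2, h3, h4⟩
        rcases hF' t' (List.mem_cons_self) with ⟨_, l', c1', h1', h2', h3', h4'⟩
        have hFts : ∀ x ∈ ts, Fits S x := fun x hx => hF x (List.mem_cons_of_mem _ hx)
        have hFts' : ∀ x ∈ ts', Fits S x := fun x hx => hF' x (List.mem_cons_of_mem _ hx)
        rw [encF_cons, encF_cons, encT_node S l c1 h1 h2 h3, encT_node S l' c1' h1' h2' h3',
          Walk.cons_append, Walk.cons_append] at h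
        -- extract equality of inserted vertices
        injection h with _ hv _ hp
        have hll : l = l' := by
          have hj : (⟨l - 1, by omega⟩ : Fin k) ∈ insert (⟨l' - 1, by omega⟩ : Fin k) S := by
            rw [← hv]; exact Finset.mem_insert_self _ _
          rcases Finset.mem_insert.mp hj with hj | hj
          · have := congrArg Fin.val hj
            simp at this
            omega
          · exact absurd hj (not_mem_of_lt (hjlt (by omega) h1 h3))
        subst hll
        have hp' := eq_of_heq hp
        rw [← Walk.append_assoc, ← Walk.append_assoc] at hp'
        rw [Walk.cons_append, Walk.cons_append,
          Walk.nil_append, Walk.nil_append] at hp'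
        set j : Fin k := (⟨l - 1, by omega⟩ : Fin k) with hjdef
        have hjS : j ∉ S := not_mem_of_lt (hjlt (by omega) h1 h3)
        have hjT : j ∈ insert j S := Finset.mem_insert_self _ _
        simp only [List.map_cons, List.sum_cons, size_node] at hN
        obtain ⟨e1, e2⟩ := append_cancel _ _ _ _
          (not_mem_support_of_stays hjT hjS (props _ c1 _ le_rfl h4).2)
          (not_mem_support_of_stays hjT hjS (props _ c1' _ le_rfl h4').2)
          hp'
        have ec1 : c1 = c1' := ih c1 c1' _ (by omega) h4 h4' e1
        have ets : ts = ts' := ih ts ts' S (by omega) hFts hFts' e2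
        rw [ec1, ets]

end Stmt13
namespace Stmt13
open SimpleGraph Walk

variable {k : ℕ}

lemma encT_node' (S : Finset (Fin k)) (l : ℕ) (c : List LTree) (h1 : 1 ≤ l) (h2 : l ≤ k)
    (j : Fin k) (hj : (j : ℕ) = l - 1) (hjS : ∀ i ∈ S, j < i) :
    encT (LTree.node l c) S =
      Walk.cons (adj_down hjS)
        ((encF (insert j S) c).append (Walk.cons (adj_up hjS) Walk.nil)) := by
  have h3 : ∀ i ∈ S, l - 1 < (i : ℕ) := fun i hi => by rw [← hj]; exact hjS i hi
  have hje : j = (⟨l - 1, Nat.lt_of_lt_of_le (Nat.sub_lt h1 Nat.one_pos) h2⟩ : Fin k) := Fin.ext (by simp [hj])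
  subst hje
  exact encT_node S l c h1 h2 h3

end Stmt13
namespace Stmt13
open SimpleGraph Walk

variable {k : ℕ}

lemma split :
    ∀ {W S : Finset (Fin k)} (q : (leaningGraph k).Walk W S) {j : Fin k} (hjS : ∀ i ∈ S, j < i),
      Stays S q → insert j S ⊆ W → (∀ x ∈ W, x ∉ S → x ≤ j) →
      ∃ (q1 : (leaningGraph k).Walk W (insert j S)) (q2 : (leaningGraph k).Walk S S),
        Stays (insert j S) q1 ∧ Stays S q2 ∧
          q = q1.append (Walk.cons (adj_up hjS) q2) := by
  intro W0 S0 q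
  induction q with
  | nil =>
    intro j hjS _ hW _
    exact absurd (hjS j (hW (Finset.mem_insert_self _ _))) (lt_irrefl j)
  | @cons W V S a r ihr =>
    intro j hjS hst hW hext
    have hstr : Stays S r := stays_of_cons hst
    by_cases hVS : V = S
    · subst hVS
      have hWeq : W = insert j V := by
        rcases a with ⟨m, hmW, hVm, hlt⟩ | ⟨m, hmV, hWm, hlt⟩
        · exfalso
          have hjW : j ∈ W := hW (Finset.mem_insert_self _ _)
          have : j ∈ V := hVm ▸ Finset.mem_insert_of_mem hjW
          exact absurd (hjS j this) (lt_irrefl j)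
        · -- W = insert m V = insert m S
          have hjW : j ∈ W := hW (Finset.mem_insert_self _ _)
          rw [hWm] at hjW
          rcases Finset.mem_insert.mp hjW with rfl | hjV
          · rw [hWm]
          · exact absurd (hjS j hjV) (lt_irrefl j)
      subst hWeq
      exact ⟨Walk.nil, r, stays_nil le_rfl, hstr, rfl⟩
    · have hSV : S ⊆ V := hstr V (Walk.start_mem_support r)
      have hstep : insert j S ⊆ V ∧ ∀ x ∈ V, x ∉ S → x ≤ j := by
        rcases a with ⟨m, hmW, hVm, hlt⟩ | ⟨m, hmV, hWm, hlt⟩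
        · subst hVm
          constructor
          · exact hW.trans (Finset.subset_insert _ _)
          · intro x hx hxS
            rcases Finset.mem_insert.mp hx with rfl | hxW
            · exact le_of_lt (hlt j (hW (Finset.mem_insert_self _ _)))
            · exact hext x hxW hxS
        · have hjV : j ∈ V := by
            by_contra hjV
            have hjW : j ∈ W := hW (Finset.mem_insert_self _ _)
            rw [hWm] at hjW
            rcases Finset.mem_insert.mp hjW with rfl | h
            · obtain ⟨x, hxV, hxS⟩ := Finset.exists_of_ssubset
                (lt_of_le_of_ne hSV (fun h => hVS h.symm))
              have h1 : x ≤ j := hext x (by rw [hWm]; exact Finset.mem_insert_of_mem hxV) hxS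
              exact absurd (hlt x hxV) (not_lt.mpr h1)
            · exact hjV h
          constructor
          · exact Finset.insert_subset hjV hSV
          · intro x hx hxS
            exact hext x (by rw [hWm]; exact Finset.mem_insert_of_mem hx) hxS
      obtain ⟨q1, q2, st1, st2, heq⟩ := ihr hjS hstr hstep.1 hstep.2
      refine ⟨Walk.cons a q1, q2, stays_cons _ hW st1, st2, ?_⟩
      rw [Walk.cons_append, heq]

lemma surjF : ∀ (N : ℕ) (S : Finset (Fin k)) (p : (leaningGraph k).Walk S S),
    p.length ≤ N → Stays S p → ∃ c : List LTree, (∀ t ∈ c, Fits S t) ∧ encF S c = p := by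
  intro N
  induction N with
  | zero =>
    intro S p hlen _
    cases p with
    | nil => exact ⟨[], by simp, rfl⟩
    | cons a r => simp [Walk.length_cons] at hlen
  | succ N ih =>
    intro S p hlen hst
    cases p with
    | nil => exact ⟨[], by simp, rfl⟩
    | cons a r =>
      rename_i V
      have hstr : Stays S r := stays_of_cons hst
      have hSV : S ⊆ V := hstr V (Walk.start_mem_support r)
      rcases a with ⟨m, hmS, hVm, hlt⟩ | ⟨m, hmV, hSm, hlt⟩
      swap
      · exfalso
        exact hmV (hSV (by rw [hSm]; exact Finset.mem_insert_self _ _))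
      · subst hVm
        obtain ⟨r1, r2, st1, st2, heq⟩ := split r hlt hstr le_rfl
          (fun x hx hxS => by
            rcases Finset.mem_insert.mp hx with rfl | h
            · exact le_rfl
            · exact absurd h hxS)
        have hlen' := congrArg Walk.length heq
        rw [Walk.length_append, Walk.length_cons] at hlen'
        replace hlen : r.length + 1 ≤ N + 1 := hlen
        obtain ⟨c1, hc1, he1⟩ := ih (insert m S) r1 (by omega) st1
        obtain ⟨c2, hc2, he2⟩ := ih S r2 (by omega) st2
        refine ⟨LTree.node ((m : ℕ) + 1) c1 :: c2, ?_, ?_⟩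
        · intro t ht
          rcases List.mem_cons.mp ht with rfl | ht
          · refine Fits.node S ((m : ℕ) + 1) c1 (by omega) (by have := m.isLt; omega) ?_ ?_
            · intro i hi
              simpa using hlt i hi
            · exact hc1
          · exact hc2 t ht
        · rw [encF_cons,
            encT_node' S ((m : ℕ) + 1) c1 (by omega) (by have := m.isLt; omega) m rfl hlt,
            Walk.cons_append, ← Walk.append_assoc, Walk.cons_append, Walk.nil_append,
            he1, he2, heq]

end Stmt13
namespace Stmt13
open SimpleGraph Walk

variable {k : ℕ}

/-- numeric version of `Fits` -/
inductive FitsN : ℕ → LTree → Prop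
  | node (m l : ℕ) (c : List LTree) (h1 : 1 ≤ l) (h2 : l ≤ m)
      (h4 : ∀ t ∈ c, FitsN (l - 1) t) : FitsN m (.node l c)

lemma fitsN_mono {m m' : ℕ} {t : LTree} (h : FitsN m t) (hm : m ≤ m') : FitsN m' t := by
  cases h with
  | node _ l c h1 h2 h4 => exact FitsN.node m' l c h1 (h2.trans hm) h4

lemma fitsN_label {m : ℕ} {t : LTree} (h : FitsN m t) : 1 ≤ t.label ∧ t.label ≤ m := by
  cases h with
  | node _ l c h1 h2 h4 => exact ⟨h1, h2⟩

lemma fitsN_dec {m : ℕ} {t : LTree} (h : FitsN m t) : t.Dec := by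
  induction h with
  | node m l c h1 h2 h4 ih =>
    refine LTree.Dec.node l c (fun t ht => ?_) ih
    have := (fitsN_label (h4 t ht)).2
    omega

lemma fitsN_bounded {m : ℕ} {t : LTree} (h : FitsN m t) : ∀ K, m ≤ K → t.Bounded K := by
  induction h with
  | node m l c h1 h2 h4 ih =>
    intro K hK
    exact LTree.Bounded.node l c h1 (h2.trans hK) (fun t ht => ih t ht K (by omega))

lemma bounded_label {K : ℕ} {t : LTree} (h : t.Bounded K) : 1 ≤ t.label ∧ t.label ≤ K := by
  cases h with
  | node l c h1 h2 h => exact ⟨h1, h2⟩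

lemma bounded_mono {K K' : ℕ} {t : LTree} (h : t.Bounded K) (hK : K ≤ K') : t.Bounded K' := by
  induction h with
  | node l c h1 h2 hc ih => exact LTree.Bounded.node l c h1 (h2.trans hK) ih

lemma dec_bounded_fitsN {K : ℕ} {t : LTree} (hd : t.Dec) : t.Bounded K → FitsN t.label t := by
  induction hd with
  | node l c h1 h2 ih =>
    intro hb
    cases hb with
    | node _ _ hb1 hb2 hbc =>
      refine FitsN.node l l c hb1 le_rfl (fun t ht => ?_)
      exact fitsN_mono (ih t ht (hbc t ht)) (by have := h1 t ht; omega)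

/-- the numeric bound attached to a vertex -/
def mB (S : Finset (Fin k)) : ℕ := if h : S.Nonempty then ((S.min' h : Fin k) : ℕ) else k

lemma mB_empty : mB (∅ : Finset (Fin k)) = k := dif_neg (by simp)

lemma mB_le (S : Finset (Fin k)) : mB S ≤ k := by
  rw [mB]
  split
  · exact le_of_lt (Fin.is_lt _)
  · exact le_rfl

lemma mB_insert {S : Finset (Fin k)} {j : Fin k} (hj : ∀ i ∈ S, j < i) :
    mB (insert j S) = (j : ℕ) := by
  have hne : (insert j S).Nonempty := ⟨j, Finset.mem_insert_self _ _⟩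
  rw [mB, dif_pos hne]
  congr 1
  apply le_antisymm
  · exact Finset.min'_le _ j (Finset.mem_insert_self _ _)
  · apply Finset.le_min'
    intro y hy
    rcases Finset.mem_insert.mp hy with rfl | hy
    · exact le_rfl
    · exact le_of_lt (hj y hy)

lemma size_mem_le {t : LTree} {c : List LTree} (ht : t ∈ c) :
    t.size ≤ (c.map LTree.size).sum :=
  List.single_le_sum (by simp) _ (List.mem_map_of_mem ht)

lemma fits_iff_fitsN : ∀ (N : ℕ) (t : LTree) (S : Finset (Fin k)),
    t.size ≤ N → (Fits S t ↔ FitsN (mB S) t) := by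
  intro N
  induction N with
  | zero =>
    intro t S h
    cases t with
    | node l c => rw [size_node] at h; omega
  | succ N ih =>
    intro t S h
    cases t with
    | node l c =>
      rw [size_node] at h
      constructor
      · rintro ⟨_, _, _, h1, h2, h3, h4⟩
        refine FitsN.node _ l c h1 ?_ (fun t ht => ?_)
        · by_cases hS : S.Nonempty
          · rw [mB, dif_pos hS]
            have := h3 _ (S.min'_mem hS)
            omega
          · rw [mB, dif_neg hS]; exact h2
        · have hsz : t.size ≤ N := by have := size_mem_le ht; omega
          have := (ih t _ hsz).mp (h4 t ht)
          rwa [mB_insert (hjlt (by omega) h1 h3)] at this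
      · rintro hN
        cases hN with
        | node _ _ _ hb1 hb2 hb4 =>
          have h2 : l ≤ k := hb2.trans (mB_le S)
          have h3 : ∀ i ∈ S, l - 1 < (i : ℕ) := by
            intro i hi
            by_cases hS : S.Nonempty
            · rw [mB, dif_pos hS] at hb2
              have h5 : (S.min' hS : ℕ) ≤ (i : ℕ) := Finset.min'_le S i hi
              omega
            · exact absurd ⟨i, hi⟩ hS
          refine Fits.node S l c hb1 h2 h3 (fun t ht => ?_)
          have hsz : t.size ≤ N := by have := size_mem_le ht; omega
          refine (ih t _ hsz).mpr ?_
          rw [mB_insert (hjlt (by omega) hb1 h3)]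
          exact hb4 t ht

lemma fits_empty_iff (t : LTree) : Fits (∅ : Finset (Fin k)) t ↔ FitsN k t := by
  have := fits_iff_fitsN t.size t (∅ : Finset (Fin k)) le_rfl
  rwa [mB_empty] at this

end Stmt13
namespace Stmt13
open SimpleGraph Walk

variable {k : ℕ}

noncomputable instance : (leaningGraph k).LocallyFinite := fun _ => Fintype.ofFinite _

/-- the walk encoded by (the children of) a tree -/
def toWalk (t : LTree) : (leaningGraph k).Walk ∅ ∅ :=
  match t with
  | .node _ c => encF ∅ c

lemma P_iff (n : ℕ) (t : LTree) :
    (t.size = n + 1 ∧ t.Dec ∧ t.Bounded (k + 1) ∧ t.label = k + 1) ↔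
      ∃ c, t = .node (k + 1) c ∧ (∀ x ∈ c, Fits (∅ : Finset (Fin k)) x) ∧
        (c.map LTree.size).sum = n := by
  cases t with
  | node l c =>
    constructor
    · rintro ⟨hsz, hdec, hbdd, hlab⟩
      have hl : l = k + 1 := hlab
      subst hl
      refine ⟨c, rfl, fun x hx => ?_, ?_⟩
      · rw [fits_empty_iff]
        cases hdec with
        | node _ _ hd1 hd2 =>
          cases hbdd with
          | node _ _ hb1 hb2 hbc =>
            refine fitsN_mono (dec_bounded_fitsN (hd2 x hx) (hbc x hx)) ?_
            have := hd1 x hx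
            omega
      · rw [size_node] at hsz; omega
    · rintro ⟨c', heq, hF, hsum⟩
      injection heq with hl hc
      subst hl
      subst hc
      have hFN : ∀ x, x ∈ c → FitsN k x := fun x hx => (fits_empty_iff x).mp (hF x hx)
      refine ⟨by rw [size_node]; omega, ?_, ?_, rfl⟩
      · refine LTree.Dec.node _ _ (fun x hx => ?_) (fun x hx => fitsN_dec (hFN x hx))
        have := (fitsN_label (hFN x hx)).2
        omega
      · exact LTree.Bounded.node _ _ (by omega) le_rfl
          (fun x hx => fitsN_bounded (hFN x hx) (k + 1) (by omega))

lemma card_walks (n : ℕ) :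
    Nat.card {p : (leaningGraph k).Walk ∅ ∅ // p.length = 2 * n} =
      Set.ncard {t : LTree | t.size = n + 1 ∧ t.Dec ∧ t.Bounded (k + 1) ∧ t.label = k + 1} ∧
    {t : LTree | t.size = n + 1 ∧ t.Dec ∧ t.Bounded (k + 1) ∧ t.label = k + 1}.Finite := by
  set P : LTree → Prop :=
    fun t => t.size = n + 1 ∧ t.Dec ∧ t.Bounded (k + 1) ∧ t.label = k + 1 with hP
  have hf : ∀ t : {t : LTree // P t}, ((toWalk t.1 : (leaningGraph k).Walk ∅ ∅)).length = 2 * n := by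
    rintro ⟨t, ht⟩
    obtain ⟨c, rfl, hF, hsum⟩ := (P_iff n t).mp ht
    show (encF ∅ c).length = 2 * n
    rw [(props _ c ∅ le_rfl hF).1, hsum]
  let f : {t : LTree // P t} → {p : (leaningGraph k).Walk ∅ ∅ // p.length = 2 * n} :=
    fun t => ⟨toWalk t.1, hf t⟩
  have hbij : Function.Bijective f := by
    constructor
    · rintro ⟨t, ht⟩ ⟨t', ht'⟩ hft
      obtain ⟨c, rfl, hF, hsum⟩ := (P_iff n t).mp ht
      obtain ⟨c', rfl, hF', hsum'⟩ := (P_iff n t').mp ht'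
      have : encF (∅ : Finset (Fin k)) c = encF ∅ c' := congrArg Subtype.val hft
      have := encF_inj _ c c' ∅ le_rfl hF hF' this
      simp [this]
    · rintro ⟨p, hp⟩
      have hst : Stays (∅ : Finset (Fin k)) p := fun y _ => Finset.empty_subset y
      obtain ⟨c, hF, henc⟩ := surjF p.length ∅ p le_rfl hst
      have hsum : (c.map LTree.size).sum = n := by
        have := (props _ c ∅ le_rfl hF).1
        rw [henc, hp] at this
        omega
      refine ⟨⟨LTree.node (k + 1) c, (P_iff n _).mpr ⟨c, rfl, hF, hsum⟩⟩, ?_⟩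
      exact Subtype.ext henc
  have e := Equiv.ofBijective f hbij
  constructor
  · rw [← Nat.card_coe_set_eq]
    exact (Nat.card_congr e).symm
  · have : Finite {t : LTree // P t} := Finite.of_equiv _ e.symm
    exact Set.finite_coe_iff.mp this

end Stmt13

theorem stmt13 (n k : ℕ) (hn : 1 ≤ n) (hk : 1 ≤ k) :
    Nat.card {p : (leaningGraph k).Walk ∅ ∅ // p.length = 2 * n} =
      Gcount (n + 1) (k + 1) - Gcount (n + 1) k := by
  classical
  obtain ⟨hcard, hCfin⟩ := Stmt13.card_walks (k := k) n
  obtain ⟨-, hC2fin⟩ := Stmt13.card_walks (k := k) (n + 1)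
  set B : Set LTree := {t : LTree | t.size = n + 1 ∧ t.Dec ∧ t.Bounded k} with hBdef
  set C : Set LTree :=
    {t : LTree | t.size = n + 1 ∧ t.Dec ∧ t.Bounded (k + 1) ∧ t.label = k + 1} with hCdef
  -- B is finite
  have hBfin : B.Finite := by
    set g : LTree → LTree := fun t => LTree.node (k + 1) [t] with hg
    have himg : g '' B ⊆
        {t : LTree | t.size = n + 1 + 1 ∧ t.Dec ∧ t.Bounded (k + 1) ∧ t.label = k + 1} := by
      rintro _ ⟨t, ⟨hsz, hdec, hbdd⟩, rfl⟩
      have hlab := Stmt13.bounded_label hbdd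
      refine ⟨?_, ?_, ?_, rfl⟩
      · rw [Stmt13.size_node]; simp [hsz]; omega
      · exact LTree.Dec.node _ _ (by intro x hx; simp at hx; subst hx; omega)
          (by intro x hx; simp at hx; subst hx; exact hdec)
      · exact LTree.Bounded.node _ _ (by omega) le_rfl
          (by intro x hx; simp at hx; subst hx; exact Stmt13.bounded_mono hbdd (by omega))
    have hinj : Set.InjOn g B := by
      intro a _ b _ hab
      injection hab with _ h
      injection h
    exact Set.Finite.of_finite_image (hC2fin.subset himg) hinj
  -- partition
  have hunion : {t : LTree | t.size = n + 1 ∧ t.Dec ∧ t.Bounded (k + 1)} = C ∪ B := by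
    ext t
    simp only [Set.mem_setOf_eq, Set.mem_union, hBdef, hCdef]
    constructor
    · rintro ⟨hsz, hdec, hbdd⟩
      have hlab := Stmt13.bounded_label hbdd
      by_cases hl : t.label = k + 1
      · exact Or.inl ⟨hsz, hdec, hbdd, hl⟩
      · refine Or.inr ⟨hsz, hdec, ?_⟩
        exact Stmt13.fitsN_bounded (Stmt13.dec_bounded_fitsN hdec hbdd) k (by omega)
    · rintro (⟨hsz, hdec, hbdd, _⟩ | ⟨hsz, hdec, hbdd⟩)
      · exact ⟨hsz, hdec, hbdd⟩
      · exact ⟨hsz, hdec, Stmt13.bounded_mono hbdd (by omega)⟩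
  have hdisj : Disjoint C B := by
    rw [Set.disjoint_left]
    rintro t ⟨_, _, _, hl⟩ ⟨_, _, hbdd⟩
    have := (Stmt13.bounded_label hbdd).2
    omega
  have hG : Gcount (n + 1) (k + 1) = C.ncard + B.ncard := by
    rw [Gcount, hunion, Set.ncard_union_eq hdisj hCfin hBfin]
  have hGB : Gcount (n + 1) k = B.ncard := rfl
  rw [hcard, hG, hGB]
  omega
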